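/- arXiv:2007.07402 — 3 statements merged into one kernel-verified Lean document; each statement's English description precedes it below -/
import Mathlib

section
/- Let f : (0,∞) → ℝ be a probability density on (0,∞) (f ≥ 0, integrable, ∫_0^∞ f = 1) with finite moment sequence, i.e. ∫_0^∞ x^n f(x) dx < ∞ for every natural number n, and satisfying ∫_0^∞ (−log f(x²))/(1+x²) dx < ∞. Define f* : ℝ → ℝ by f*(x) = |x|·f(x²) for x ≠ 0 (and f*(0) = 0). Then: (i) f* is a probability density on ℝ; (ii) f* has a finite moment sequence, i.e. ∫_ℝ |x|^n f*(x) dx < ∞ for all n; (iii) all odd-order moments of f* vanish: ∫_ℝ x^{2k+1} f*(x) dx = 0 for every natural number k; and (iv) f* has finite logarithmic integral: ∫_ℝ (−log f*(x))/(1+x²) dx < ∞. -/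
open MeasureTheory Filter Set

lemma aux_sq_image : (fun x : ℝ => x ^ 2) '' Set.Ioi 0 = Set.Ioi 0 := by
  ext y
  constructor
  · rintro ⟨x, hx, rfl⟩; exact pow_pos (Set.mem_Ioi.mp hx) 2
  · intro hy
    exact ⟨Real.sqrt y, Real.sqrt_pos.mpr hy, Real.sq_sqrt hy.le⟩

lemma aux_sq_deriv : ∀ x ∈ Set.Ioi (0:ℝ),
    HasDerivWithinAt (fun x : ℝ => x ^ 2) (2 * x) (Set.Ioi 0) x := by
  intro x _
  simpa using (hasDerivAt_pow 2 x).hasDerivWithinAt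

lemma aux_sq_inj : Set.InjOn (fun x : ℝ => x ^ 2) (Set.Ioi 0) := by
  intro a ha b hb h
  simp only [Set.mem_Ioi] at ha hb
  simp only at h
  nlinarith [sq_nonneg (a - b), sq_nonneg (a + b)]

lemma aux_lint_cov (g : ℝ → ENNReal) :
    ∫⁻ x in Set.Ioi (0:ℝ), g x
      = ∫⁻ x in Set.Ioi (0:ℝ), ENNReal.ofReal |2 * x| * g (x ^ 2) := by
  conv_lhs => rw [← aux_sq_image]
  simpa only [ContinuousLinearMap.det_toSpanSingleton] using
    MeasureTheory.lintegral_image_eq_lintegral_abs_det_fderiv_mul volume measurableSet_Ioi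
      (fun x hx => (aux_sq_deriv x hx).hasFDerivWithinAt) aux_sq_inj g

lemma aux_lintegral_comp_abs (g : ℝ → ENNReal) :
    ∫⁻ x : ℝ, g |x| = 2 * ∫⁻ x in Set.Ioi (0:ℝ), g x := by
  have hemb : MeasurableEmbedding (fun x : ℝ => -x) :=
    (Homeomorph.neg ℝ).measurableEmbedding
  have hIoi : ∫⁻ x in Set.Ioi (0:ℝ), g |x| = ∫⁻ x in Set.Ioi (0:ℝ), g x :=
    setLIntegral_congr_fun measurableSet_Ioi
      (fun x hx => by simp only [abs_of_pos (Set.mem_Ioi.mp hx)])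
  have h1 : ∫⁻ x in Set.Iic (0:ℝ), g |x| = ∫⁻ x in Set.Ioi (0:ℝ), g x := by
    calc ∫⁻ x in Set.Iic (0:ℝ), g |x|
        = ∫⁻ x in Set.Iic (0:ℝ), g |x| ∂(Measure.map (fun x : ℝ => -x) volume) := by
          rw [Measure.map_neg_eq_self]
      _ = ∫⁻ x in (fun x : ℝ => -x) ⁻¹' Set.Iic 0, g |(-x)| := by
          rw [hemb.restrict_map, hemb.lintegral_map]
      _ = ∫⁻ x in Set.Ici (0:ℝ), g |x| := by
          have : (fun x : ℝ => -x) ⁻¹' Set.Iic 0 = Set.Ici 0 := by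
            ext x; simp
          rw [this]
          exact lintegral_congr fun x => by rw [abs_neg]
      _ = ∫⁻ x in Set.Ioi (0:ℝ), g |x| :=
          (setLIntegral_congr (Ioi_ae_eq_Ici (a := (0:ℝ)))).symm
      _ = ∫⁻ x in Set.Ioi (0:ℝ), g x := hIoi
  rw [← lintegral_add_compl (fun x => g |x|) (measurableSet_Ioi (a := (0:ℝ))),
    Set.compl_Ioi, hIoi, h1, two_mul]

theorem symmetrized_density_properties
    (f : ℝ → ℝ)
    (hf0 : ∀ x ∈ Set.Ioi (0:ℝ), 0 ≤ f x)
    (hfi : IntegrableOn f (Set.Ioi 0))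
    (hf1 : ∫ x in Set.Ioi (0:ℝ), f x = 1)
    (hmom : ∀ n : ℕ, ∫⁻ x in Set.Ioi (0:ℝ), ENNReal.ofReal (x ^ n * f x) < ⊤)
    (hkrein : ∫⁻ x in Set.Ioi (0:ℝ), ENNReal.ofReal (-Real.log (f (x ^ 2)) / (1 + x ^ 2)) < ⊤)
    (fstar : ℝ → ℝ) (hfstar : ∀ x : ℝ, fstar x = |x| * f (x ^ 2)) :
    ((∀ x : ℝ, 0 ≤ fstar x) ∧ Integrable fstar ∧ ∫ x : ℝ, fstar x = 1) ∧
    (∀ n : ℕ, ∫⁻ x : ℝ, ENNReal.ofReal (|x| ^ n * fstar x) < ⊤) ∧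
    (∀ k : ℕ, ∫ x : ℝ, x ^ (2 * k + 1) * fstar x = 0) ∧
    ∫⁻ x : ℝ, ENNReal.ofReal (-Real.log (fstar x) / (1 + x ^ 2)) < ⊤ := by
  -- nonnegativity
  have hpos : ∀ x : ℝ, 0 ≤ fstar x := by
    intro x
    rcases eq_or_ne x 0 with rfl | hx
    · simp [hfstar]
    · rw [hfstar]
      exact mul_nonneg (abs_nonneg x) (hf0 _ (Set.mem_Ioi.mpr (by positivity)))
  -- evenness
  have heven : ∀ x : ℝ, fstar (-x) = fstar x := by
    intro x; rw [hfstar, hfstar, abs_neg, neg_pow]; simp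
  -- integrability on Ioi 0
  have hIoi : IntegrableOn fstar (Set.Ioi 0) := by
    have himg : IntegrableOn f ((fun x : ℝ => x ^ 2) '' Set.Ioi 0) := by
      rw [aux_sq_image]; exact hfi
    have h := (integrableOn_image_iff_integrableOn_abs_deriv_smul measurableSet_Ioi
      aux_sq_deriv aux_sq_inj f).mp himg
    simp only [smul_eq_mul] at h
    have h2 : IntegrableOn (fun x : ℝ => (2⁻¹ : ℝ) * (|2 * x| * f (x ^ 2))) (Set.Ioi 0) :=
      h.const_mul _
    refine h2.congr_fun (fun x hx => ?_) measurableSet_Ioi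
    simp only [hfstar, abs_mul, Nat.abs_ofNat]
    rw [abs_of_pos (show (0:ℝ) < x from hx)]
    ring
  have hIic : IntegrableOn fstar (Set.Iic 0) := by
    have m : MeasurableEmbedding fun x : ℝ => -x := (Homeomorph.neg ℝ).measurableEmbedding
    rw [← Measure.map_neg_eq_self (volume : Measure ℝ), IntegrableOn, m.restrict_map,
      m.integrable_map_iff]
    have hpre : (fun x : ℝ => -x) ⁻¹' Set.Iic 0 = Set.Ici 0 := by ext x; simp
    rw [hpre]
    have : IntegrableOn fstar (Set.Ici 0) := Iff.mpr integrableOn_Ici_iff_integrableOn_Ioi hIoi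
    exact this.congr_fun (fun x _ => (heven x).symm) measurableSet_Ici
  have hint : Integrable fstar := by
    rw [← integrableOn_univ, ← Set.Iic_union_Ioi (a := (0:ℝ))]
    exact hIic.union hIoi
  -- total mass 1
  have htot : ∫ x : ℝ, fstar x = 1 := by
    have hF : ∀ x : ℝ, fstar x = |x| * f (|x| ^ 2) := by
      intro x; rw [hfstar, sq_abs]
    have hcov : ∫ x in Set.Ioi (0:ℝ), f x = ∫ x in Set.Ioi (0:ℝ), |2 * x| • f (x ^ 2) := by
      conv_lhs => rw [← aux_sq_image]
      exact integral_image_eq_integral_abs_deriv_smul measurableSet_Ioi aux_sq_deriv aux_sq_inj f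
    have h2 : ∫ x in Set.Ioi (0:ℝ), |2 * x| • f (x ^ 2)
        = 2 * ∫ x in Set.Ioi (0:ℝ), x * f (x ^ 2) := by
      rw [← integral_const_mul]
      refine setIntegral_congr_fun measurableSet_Ioi (fun x hx => ?_)
      rw [smul_eq_mul, abs_of_pos (by simp only [Set.mem_Ioi] at hx; linarith : (0:ℝ) < 2 * x)]
      ring
    calc ∫ x : ℝ, fstar x = ∫ x : ℝ, (fun y => y * f (y ^ 2)) |x| := by
          refine integral_congr_ae (Filter.Eventually.of_forall fun x => ?_)
          rw [hF x]
      _ = 2 * ∫ x in Set.Ioi (0:ℝ), x * f (x ^ 2) :=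
          integral_comp_abs (f := fun y => y * f (y ^ 2))
      _ = ∫ x in Set.Ioi (0:ℝ), f x := by rw [hcov, h2]
      _ = 1 := hf1
  have hfstarAEM : AEMeasurable fstar := hint.aestronglyMeasurable.aemeasurable
  -- key moment bound
  have key : ∀ m : ℕ, ∫⁻ x in Set.Ioi (0:ℝ), ENNReal.ofReal ((x ^ 2) ^ m * fstar x) < ⊤ := by
    intro m
    have hcov := aux_lint_cov (fun u => ENNReal.ofReal (u ^ m * f u))
    refine lt_of_le_of_lt ?_ (hcov ▸ hmom m)
    refine lintegral_mono_ae ((ae_restrict_iff' measurableSet_Ioi).mpr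
      (Filter.Eventually.of_forall fun x hx => ?_))
    have hx0 : (0:ℝ) < x := hx
    have hf2 : 0 ≤ f (x ^ 2) := hf0 _ (Set.mem_Ioi.mpr (by positivity))
    rw [hfstar, abs_of_pos hx0]
    calc ENNReal.ofReal ((x ^ 2) ^ m * (x * f (x ^ 2)))
        ≤ ENNReal.ofReal (|2 * x| * ((x ^ 2) ^ m * f (x ^ 2))) := by
          apply ENNReal.ofReal_le_ofReal
          rw [abs_of_pos (by linarith : (0:ℝ) < 2 * x)]
          nlinarith [mul_nonneg (mul_nonneg (pow_nonneg (sq_nonneg x) m) hx0.le) hf2]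
      _ = ENNReal.ofReal |2 * x| * ENNReal.ofReal ((x ^ 2) ^ m * f (x ^ 2)) :=
          ENNReal.ofReal_mul (abs_nonneg _)
  have hmeasm : ∀ m : ℕ, AEMeasurable
      (fun x : ℝ => ENNReal.ofReal ((x ^ 2) ^ m * fstar x)) (volume.restrict (Set.Ioi 0)) :=
    fun m => (((measurable_id.pow_const 2).pow_const m).aemeasurable.mul
      hfstarAEM.restrict).ennreal_ofReal
  -- moments
  have hmoments : ∀ n : ℕ, ∫⁻ x : ℝ, ENNReal.ofReal (|x| ^ n * fstar x) < ⊤ := by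
    intro n
    have hrw : (fun x : ℝ => ENNReal.ofReal (|x| ^ n * fstar x))
        = fun x : ℝ => (fun y : ℝ => ENNReal.ofReal (y ^ n * (y * f (y ^ 2)))) |x| := by
      funext x
      simp only [sq_abs]
      rw [hfstar]
    have := aux_lintegral_comp_abs (fun y : ℝ => ENNReal.ofReal (y ^ n * (y * f (y ^ 2))))
    rw [show (∫⁻ x : ℝ, ENNReal.ofReal (|x| ^ n * fstar x))
        = ∫⁻ x : ℝ, (fun y : ℝ => ENNReal.ofReal (y ^ n * (y * f (y ^ 2)))) |x| from by
          rw [hrw], this]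
    have hIoiBound : ∫⁻ x in Set.Ioi (0:ℝ), ENNReal.ofReal (x ^ n * (x * f (x ^ 2))) < ⊤ := by
      have hle : ∫⁻ x in Set.Ioi (0:ℝ), ENNReal.ofReal (x ^ n * (x * f (x ^ 2)))
          ≤ ∫⁻ x in Set.Ioi (0:ℝ), (ENNReal.ofReal ((x ^ 2) ^ 0 * fstar x)
              + ENNReal.ofReal ((x ^ 2) ^ n * fstar x)) := by
        refine lintegral_mono_ae ((ae_restrict_iff' measurableSet_Ioi).mpr
          (Filter.Eventually.of_forall fun x hx => ?_))
        have hx0 : (0:ℝ) < x := hx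
        have hf2 : 0 ≤ f (x ^ 2) := hf0 _ (Set.mem_Ioi.mpr (by positivity))
        have hb : x ^ n ≤ 1 + (x ^ 2) ^ n := by
          rcases le_total x 1 with h1 | h1
          · have h2 : x ^ n ≤ 1 := pow_le_one₀ hx0.le h1
            have h3 : (0:ℝ) ≤ (x ^ 2) ^ n := pow_nonneg (sq_nonneg x) n
            linarith
          · have h2 : x ^ n ≤ x ^ (2 * n) := pow_le_pow_right₀ h1 (by omega)
            rw [pow_mul] at h2
            linarith
        have hxf : (0:ℝ) ≤ x * f (x ^ 2) := mul_nonneg hx0.le hf2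
        have hcore : x ^ n * (x * f (x ^ 2))
            ≤ (x ^ 2) ^ 0 * fstar x + (x ^ 2) ^ n * fstar x := by
          rw [hfstar, abs_of_pos hx0, pow_zero, one_mul]
          nlinarith [mul_le_mul_of_nonneg_right hb hxf]
        calc ENNReal.ofReal (x ^ n * (x * f (x ^ 2)))
            ≤ ENNReal.ofReal ((x ^ 2) ^ 0 * fstar x + (x ^ 2) ^ n * fstar x) :=
              ENNReal.ofReal_le_ofReal hcore
          _ ≤ _ := ENNReal.ofReal_add_le
      refine lt_of_le_of_lt hle ?_
      rw [lintegral_add_left' (hmeasm 0)]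
      exact ENNReal.add_lt_top.mpr ⟨key 0, key n⟩
    exact ENNReal.mul_lt_top (by norm_num) hIoiBound
  -- odd moments
  have hodd : ∀ k : ℕ, ∫ x : ℝ, x ^ (2 * k + 1) * fstar x = 0 := by
    intro k
    have h := integral_neg_eq_self (fun x : ℝ => x ^ (2 * k + 1) * fstar x) volume
    have h2 : ∫ x : ℝ, (-x) ^ (2 * k + 1) * fstar (-x)
        = - ∫ x : ℝ, x ^ (2 * k + 1) * fstar x := by
      rw [← integral_neg]
      refine integral_congr_ae (Filter.Eventually.of_forall fun x => ?_)
      show (-x) ^ (2 * k + 1) * fstar (-x) = -(x ^ (2 * k + 1) * fstar x)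
      rw [heven, (odd_two_mul_add_one k).neg_pow, neg_mul]
    rw [h2] at h
    linarith
  -- Krein condition
  have hkrein' : ∫⁻ x : ℝ, ENNReal.ofReal (-Real.log (fstar x) / (1 + x ^ 2)) < ⊤ := by
    have hrw : (fun x : ℝ => ENNReal.ofReal (-Real.log (fstar x) / (1 + x ^ 2)))
        = fun x : ℝ =>
          (fun y : ℝ => ENNReal.ofReal (-Real.log (y * f (y ^ 2)) / (1 + y ^ 2))) |x| := by
      funext x
      simp only [sq_abs]
      rw [hfstar]
    rw [show (∫⁻ x : ℝ, ENNReal.ofReal (-Real.log (fstar x) / (1 + x ^ 2)))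
        = ∫⁻ x : ℝ, (fun y : ℝ =>
            ENNReal.ofReal (-Real.log (y * f (y ^ 2)) / (1 + y ^ 2))) |x| from by rw [hrw],
      aux_lintegral_comp_abs (fun y : ℝ =>
        ENNReal.ofReal (-Real.log (y * f (y ^ 2)) / (1 + y ^ 2)))]
    have hlogmeas : Measurable fun x : ℝ => ENNReal.ofReal (-Real.log x / (1 + x ^ 2)) :=
      (Real.measurable_log.neg.div
        (measurable_const.add (measurable_id.pow_const 2))).ennreal_ofReal
    have hbound : ∫⁻ x in Set.Ioi (0:ℝ),
        ENNReal.ofReal (-Real.log (x * f (x ^ 2)) / (1 + x ^ 2))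
        ≤ ∫⁻ x in Set.Ioi (0:ℝ), (ENNReal.ofReal (-Real.log x / (1 + x ^ 2))
            + ENNReal.ofReal (-Real.log (f (x ^ 2)) / (1 + x ^ 2))) := by
      refine lintegral_mono_ae ((ae_restrict_iff' measurableSet_Ioi).mpr
        (Filter.Eventually.of_forall fun x hx => ?_))
      have hx0 : (0:ℝ) < x := hx
      rcases eq_or_ne (f (x ^ 2)) 0 with hf2 | hf2
      · rw [hf2, mul_zero, Real.log_zero, neg_zero, zero_div, ENNReal.ofReal_zero]
        exact zero_le
      · rw [Real.log_mul (ne_of_gt hx0) hf2, neg_add, add_div]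
        exact ENNReal.ofReal_add_le
    have hlog : ∫⁻ x in Set.Ioi (0:ℝ), ENNReal.ofReal (-Real.log x / (1 + x ^ 2)) < ⊤ := by
      rw [← Set.Ioc_union_Ioi_eq_Ioi (zero_le_one (α := ℝ)),
        lintegral_union measurableSet_Ioi (Set.Ioc_disjoint_Ioi le_rfl)]
      have hright : ∫⁻ x in Set.Ioi (1:ℝ), ENNReal.ofReal (-Real.log x / (1 + x ^ 2)) = 0 := by
        rw [lintegral_eq_zero_iff hlogmeas]
        refine (ae_restrict_iff' measurableSet_Ioi).mpr
          (Filter.Eventually.of_forall fun x hx => ?_)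
        have hx1 : (1:ℝ) < x := hx
        show ENNReal.ofReal (-Real.log x / (1 + x ^ 2)) = 0
        rw [ENNReal.ofReal_eq_zero]
        apply div_nonpos_of_nonpos_of_nonneg
        · simp only [neg_nonpos]
          exact Real.log_nonneg hx1.le
        · positivity
      have hleft : ∫⁻ x in Set.Ioc (0:ℝ) 1,
          ENNReal.ofReal (-Real.log x / (1 + x ^ 2)) < ⊤ := by
        have hintg : IntegrableOn (fun x : ℝ => 2 * x ^ (-(2⁻¹:ℝ))) (Set.Ioc 0 1) := by
          have h := (intervalIntegral.intervalIntegrable_rpow'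
            (a := 0) (b := 1) (r := -(2⁻¹:ℝ)) (by norm_num)).const_mul (2:ℝ)
          rwa [intervalIntegrable_iff_integrableOn_Ioc_of_le zero_le_one] at h
        refine lt_of_le_of_lt ?_ hintg.lintegral_lt_top
        refine lintegral_mono_ae ((ae_restrict_iff' measurableSet_Ioc).mpr
          (Filter.Eventually.of_forall fun x hx => ?_))
        refine ENNReal.ofReal_le_ofReal ?_
        have hx0 : (0:ℝ) < x := hx.1
        have hx1 : x ≤ 1 := hx.2
        have hlog0 : 0 ≤ -Real.log x := by
          simp only [neg_nonneg]
          exact Real.log_nonpos hx0.le hx1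
        have step1 : -Real.log x / (1 + x ^ 2) ≤ -Real.log x :=
          div_le_self hlog0 (by nlinarith)
        have step2 : -Real.log x ≤ 2 * x ^ (-(2⁻¹:ℝ)) := by
          have hr := Real.log_le_sub_one_of_pos (Real.rpow_pos_of_pos hx0 (-(2⁻¹:ℝ)))
          rw [Real.log_rpow hx0] at hr
          have hpow : (0:ℝ) < x ^ (-(2⁻¹:ℝ)) := Real.rpow_pos_of_pos hx0 _
          linarith
        linarith
      rw [hright]
      simpa using hleft
    refine ENNReal.mul_lt_top (by norm_num) ?_
    refine lt_of_le_of_lt hbound ?_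
    rw [lintegral_add_left hlogmeas]
    exact ENNReal.add_lt_top.mpr ⟨hlog, hkrein⟩
  exact ⟨⟨hpos, hint, htot⟩, hmoments, hodd, hkrein'⟩
end

section
/- Fix a natural number n ≥ 1 and define f_n : ℝ → ℝ by f_n(x) = (1/((2n+1)·√π))·|x|^{−2n/(2n+1)}·exp(−|x|^{2/(2n+1)}) for x ≠ 0, and h_s^n : ℝ → ℝ by h_s^n(t) = sgn(t)·sin( π·n/(2n+1) + tan(π/(2n+1))·|t|^{2/(2n+1)} ) for t ≠ 0. Then for every natural number k, the function x ↦ x^k·f_n(x)·h_s^n(x) is Lebesgue integrable on ℝ and ∫_ℝ x^k f_n(x) h_s^n(x) dx = 0. -/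
open MeasureTheory Filter Set

lemma myNorm (c : ℂ) (hre : c.re = 1) (m : ℕ) (t : ℝ) (ht : 0 < t) :
    ‖(t : ℂ) ^ m * Complex.exp (-(c * t))‖ = t ^ m * Real.exp (-t) := by
  rw [norm_mul, norm_pow, Complex.norm_real, Real.norm_eq_abs, abs_of_pos ht,
    Complex.norm_exp]
  congr 2
  simp [Complex.mul_re, hre]

lemma myInt (c : ℂ) (hre : c.re = 1) (m : ℕ) :
    IntegrableOn (fun t : ℝ => (t : ℂ) ^ m * Complex.exp (-(c * t))) (Ioi 0) := by
  have hint : IntegrableOn (fun t : ℝ => t ^ m * Real.exp (-t)) (Ioi 0) := by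
    have h := Real.GammaIntegral_convergent (s := (m : ℝ) + 1) (by positivity)
    simp only [add_sub_cancel_right, Real.rpow_natCast] at h
    exact h.congr_fun (fun x _ => mul_comm _ _) measurableSet_Ioi
  refine Integrable.mono' hint ?_ ?_
  · exact (((Complex.continuous_ofReal.pow m).mul
      (Complex.continuous_exp.comp (by continuity))).aestronglyMeasurable).restrict
  · filter_upwards [ae_restrict_mem measurableSet_Ioi] with t ht
    rw [myNorm c hre m t ht]

lemma myVal (c : ℂ) (hre : c.re = 1) : ∀ m : ℕ,
    ∫ t : ℝ in Ioi 0, (t : ℂ) ^ m * Complex.exp (-(c * t)) =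
      (Nat.factorial m : ℂ) / c ^ (m + 1) := by
  have hc0 : c ≠ 0 := fun h => by simp [h] at hre
  have h2 : ∀ t : ℝ, HasDerivAt (fun t : ℝ => Complex.exp (-(c * t)))
      (-c * Complex.exp (-(c * t))) t := by
    intro t
    have h3 : HasDerivAt (fun t : ℝ => -(c * (t : ℂ))) (-c) t := by
      have h4 := (((hasDerivAt_id (t : ℂ)).const_mul c).comp_ofReal (z := t)).neg
      simp only [mul_one] at h4
      exact h4
    exact ((Complex.hasDerivAt_exp (-(c * t))).comp t h3).congr_deriv (by ring)
  have htend : ∀ j : ℕ, Tendsto (fun t : ℝ => (t : ℂ) ^ j * Complex.exp (-(c * t)))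
      atTop (nhds 0) := by
    intro j
    apply squeeze_zero_norm' ?_ (Real.tendsto_pow_mul_exp_neg_atTop_nhds_zero j)
    filter_upwards [eventually_gt_atTop (0 : ℝ)] with t ht
    exact le_of_eq (myNorm c hre j t ht)
  intro m
  induction m with
  | zero =>
    have key := integral_Ioi_of_hasDerivAt_of_tendsto'
        (f := fun t : ℝ => Complex.exp (-(c * t)))
        (f' := fun t : ℝ => -c * Complex.exp (-(c * t))) (a := 0) (m := 0)
        (fun x _ => h2 x) ?_ ?_
    · rw [integral_const_mul] at key
      simp only [Complex.ofReal_zero, mul_zero, neg_zero, Complex.exp_zero, zero_sub] at key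
      have e0 : ∫ t : ℝ in Ioi 0, (t : ℂ) ^ 0 * Complex.exp (-(c * t)) =
          ∫ t : ℝ in Ioi 0, Complex.exp (-(c * t)) := by simp
      rw [e0]
      rw [show (Nat.factorial 0 : ℂ) = 1 by norm_num, pow_one, eq_div_iff hc0]
      linear_combination -key
    · exact ((myInt c hre 0).congr_fun (fun x _ => by rw [pow_zero, one_mul])
        measurableSet_Ioi).const_mul (-c)
    · simpa using htend 0
  | succ m ih =>
    have hder : ∀ t : ℝ, HasDerivAt (fun t : ℝ => (t : ℂ) ^ (m + 1) * Complex.exp (-(c * t)))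
        (((m : ℂ) + 1) * ((t : ℂ) ^ m * Complex.exp (-(c * t))) +
          (-c) * ((t : ℂ) ^ (m + 1) * Complex.exp (-(c * t)))) t := by
      intro t
      have h1 : HasDerivAt (fun t : ℝ => (t : ℂ) ^ (m + 1)) ((m + 1) * (t : ℂ) ^ m) t := by
        simpa using (hasDerivAt_pow (m + 1) (t : ℂ)).comp_ofReal (z := t)
      have := h1.mul (h2 t)
      exact this.congr_deriv (by ring)
    have key := integral_Ioi_of_hasDerivAt_of_tendsto'
        (f := fun t : ℝ => (t : ℂ) ^ (m + 1) * Complex.exp (-(c * t)))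
        (f' := fun t : ℝ => ((m : ℂ) + 1) * ((t : ℂ) ^ m * Complex.exp (-(c * t))) +
          (-c) * ((t : ℂ) ^ (m + 1) * Complex.exp (-(c * t)))) (a := 0) (m := 0)
        (fun x _ => hder x) ?_ ?_
    · have key3 : ((m : ℂ) + 1) * ((Nat.factorial m : ℂ) / c ^ (m + 1)) =
          c * ∫ t : ℝ in Ioi 0, (t : ℂ) ^ (m + 1) * Complex.exp (-(c * t)) := by
        rw [integral_add ((myInt c hre m).const_mul _) ((myInt c hre (m + 1)).const_mul _),
          integral_const_mul, integral_const_mul, ih] at key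
        simp only [Complex.ofReal_zero, zero_pow (Nat.succ_ne_zero m), zero_mul, mul_zero,
          zero_sub, sub_zero, neg_zero] at key
        linear_combination key
      rw [eq_div_iff (pow_ne_zero (m + 1 + 1) hc0)]
      calc (∫ t : ℝ in Ioi 0, (t : ℂ) ^ (m + 1) * Complex.exp (-(c * t))) * c ^ (m + 1 + 1)
          = (c * ∫ t : ℝ in Ioi 0, (t : ℂ) ^ (m + 1) * Complex.exp (-(c * t))) * c ^ (m + 1) := by
            ring
        _ = (((m : ℂ) + 1) * ((Nat.factorial m : ℂ) / c ^ (m + 1))) * c ^ (m + 1) := by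
            rw [← key3]
        _ = ((m : ℂ) + 1) * (Nat.factorial m : ℂ) := by
            rw [mul_assoc, div_mul_cancel₀ _ (pow_ne_zero (m + 1) hc0)]
        _ = _ := by
            rw [Nat.factorial_succ]
            push_cast
            ring
    · exact ((myInt c hre m).const_mul _).add ((myInt c hre (m + 1)).const_mul _)
    · exact htend (m + 1)

lemma hre' (b : ℝ) : (1 - Complex.I * (b : ℂ)).re = 1 := by simp

lemma myDecomp (m : ℕ) (a b : ℝ) (u : ℝ) :
    Complex.exp ((a : ℂ) * Complex.I) *
      ((u : ℂ) ^ m * Complex.exp (-((1 - Complex.I * b) * u))) =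
    ((u ^ m * Real.exp (-u) : ℝ) : ℂ) * Complex.exp (((a + b * u : ℝ) : ℂ) * Complex.I) := by
  have hexp : Complex.exp ((a : ℂ) * Complex.I) * Complex.exp (-((1 - Complex.I * b) * u)) =
      Complex.exp (((-u : ℝ) : ℂ)) * Complex.exp (((a + b * u : ℝ) : ℂ) * Complex.I) := by
    rw [← Complex.exp_add, ← Complex.exp_add]
    congr 1
    push_cast
    ring
  calc Complex.exp ((a : ℂ) * Complex.I) *
        ((u : ℂ) ^ m * Complex.exp (-((1 - Complex.I * b) * u)))
      = (u : ℂ) ^ m * (Complex.exp ((a : ℂ) * Complex.I) *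
          Complex.exp (-((1 - Complex.I * b) * u))) := by ring
    _ = (u : ℂ) ^ m * (Complex.exp (((-u : ℝ) : ℂ)) *
          Complex.exp (((a + b * u : ℝ) : ℂ) * Complex.I)) := by rw [hexp]
    _ = _ := by
        push_cast
        ring

lemma mySinVal (m : ℕ) (a b : ℝ) :
    ∫ u : ℝ in Ioi 0, u ^ m * Real.exp (-u) * Real.sin (a + b * u) =
      (Complex.exp ((a : ℂ) * Complex.I) *
        ((Nat.factorial m : ℂ) / (1 - Complex.I * b) ^ (m + 1))).im := by
  have hfun : ∀ u : ℝ, u ^ m * Real.exp (-u) * Real.sin (a + b * u) =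
      (Complex.exp ((a : ℂ) * Complex.I) *
        ((u : ℂ) ^ m * Complex.exp (-((1 - Complex.I * b) * u)))).im := by
    intro u
    rw [myDecomp]
    simp only [Complex.mul_im, Complex.ofReal_im, Complex.ofReal_re,
      Complex.exp_ofReal_mul_I_im, zero_mul, add_zero, mul_zero]
  have hI : Integrable (fun u : ℝ => Complex.exp ((a : ℂ) * Complex.I) *
      ((u : ℂ) ^ m * Complex.exp (-((1 - Complex.I * b) * u))))
      (volume.restrict (Ioi 0)) := (myInt _ (hre' b) m).const_mul _
  calc ∫ u : ℝ in Ioi 0, u ^ m * Real.exp (-u) * Real.sin (a + b * u)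
      = ∫ u : ℝ in Ioi 0, (Complex.exp ((a : ℂ) * Complex.I) *
          ((u : ℂ) ^ m * Complex.exp (-((1 - Complex.I * b) * u)))).im := by
        exact integral_congr_ae (Eventually.of_forall fun u => hfun u)
    _ = (∫ u : ℝ in Ioi 0, Complex.exp ((a : ℂ) * Complex.I) *
          ((u : ℂ) ^ m * Complex.exp (-((1 - Complex.I * b) * u)))).im := by
        exact Complex.imCLM.integral_comp_comm hI
    _ = _ := by rw [integral_const_mul, myVal _ (hre' b) m]

lemma mySinInt (m : ℕ) (a b : ℝ) :
    IntegrableOn (fun u : ℝ => u ^ m * Real.exp (-u) * Real.sin (a + b * u)) (Ioi 0) := by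
  have hint : IntegrableOn (fun t : ℝ => t ^ m * Real.exp (-t)) (Ioi 0) := by
    have h := Real.GammaIntegral_convergent (s := (m : ℝ) + 1) (by positivity)
    simp only [add_sub_cancel_right, Real.rpow_natCast] at h
    exact h.congr_fun (fun x _ => mul_comm _ _) measurableSet_Ioi
  refine Integrable.mono' hint ((by continuity : Continuous (fun u : ℝ => u ^ m * Real.exp (-u) * Real.sin (a + b * u))).aestronglyMeasurable.restrict) ?_
  filter_upwards [ae_restrict_mem measurableSet_Ioi] with t ht
  rw [Real.norm_eq_abs, abs_mul, abs_mul]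
  have h1 : |t ^ m| = t ^ m := abs_of_nonneg (pow_nonneg (le_of_lt ht) m)
  have h2 : |Real.exp (-t)| = Real.exp (-t) := abs_of_nonneg (Real.exp_nonneg _)
  rw [h1, h2]
  calc t ^ m * Real.exp (-t) * |Real.sin (a + b * t)| ≤ t ^ m * Real.exp (-t) * 1 := by
        gcongr
        · exact mul_nonneg (pow_nonneg (le_of_lt ht) m) (Real.exp_nonneg _)
        · exact Real.abs_sin_le_one _
    _ = t ^ m * Real.exp (-t) := mul_one _

lemma myKey (θ : ℝ) (hcos : Real.cos θ ≠ 0) :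
    (1 - Complex.I * (Real.tan θ : ℂ)) =
      (Real.cos θ : ℂ)⁻¹ * Complex.exp (-(θ : ℂ) * Complex.I) := by
  have hccos : Complex.cos (θ : ℂ) ≠ 0 := by
    rw [← Complex.ofReal_cos]
    exact Complex.ofReal_ne_zero.mpr hcos
  rw [Complex.exp_mul_I, Complex.cos_neg, Complex.sin_neg, Real.tan_eq_sin_div_cos]
  push_cast
  field_simp
  ring

lemma myIm (θ a : ℝ) (m : ℕ) (hcos : Real.cos θ ≠ 0)
    (hsin : Real.sin (a + (m + 1) * θ) = 0) :
    (Complex.exp ((a : ℂ) * Complex.I) *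
      ((Nat.factorial m : ℂ) / (1 - Complex.I * (Real.tan θ : ℂ)) ^ (m + 1))).im = 0 := by
  have hP : (1 - Complex.I * (Real.tan θ : ℂ)) ^ (m + 1) =
      ((Real.cos θ : ℂ) ^ (m + 1))⁻¹ *
        Complex.exp (((m + 1 : ℕ) : ℂ) * (-(θ : ℂ) * Complex.I)) := by
    rw [myKey θ hcos, mul_pow, ← Complex.exp_nat_mul, inv_pow]
  have h3 : Complex.exp ((a : ℂ) * Complex.I) *
        ((Nat.factorial m : ℂ) / (1 - Complex.I * (Real.tan θ : ℂ)) ^ (m + 1)) =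
      ((Nat.factorial m : ℂ) * (Real.cos θ : ℂ) ^ (m + 1)) *
        Complex.exp (((a + (m + 1) * θ : ℝ) : ℂ) * Complex.I) := by
    calc Complex.exp ((a : ℂ) * Complex.I) *
          ((Nat.factorial m : ℂ) / (1 - Complex.I * (Real.tan θ : ℂ)) ^ (m + 1))
        = Complex.exp ((a : ℂ) * Complex.I) * ((Nat.factorial m : ℂ) *
            (((Real.cos θ : ℂ) ^ (m + 1))⁻¹ *
              Complex.exp (((m + 1 : ℕ) : ℂ) * (-(θ : ℂ) * Complex.I)))⁻¹) := by
          rw [hP, div_eq_mul_inv]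
      _ = ((Nat.factorial m : ℂ) * (Real.cos θ : ℂ) ^ (m + 1)) *
            (Complex.exp ((a : ℂ) * Complex.I) *
              (Complex.exp (((m + 1 : ℕ) : ℂ) * (-(θ : ℂ) * Complex.I)))⁻¹) := by
          rw [mul_inv, inv_inv]
          ring
      _ = _ := by
          rw [← Complex.exp_neg, ← Complex.exp_add]
          congr 1
          push_cast
          ring
  have h4 : ((Nat.factorial m : ℂ) * (Real.cos θ : ℂ) ^ (m + 1)).im = 0 := by
    rw [← Complex.ofReal_pow, ← Complex.ofReal_natCast, ← Complex.ofReal_mul]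
    exact Complex.ofReal_im _
  rw [h3]
  simp only [Complex.mul_im, Complex.exp_ofReal_mul_I_im, hsin, mul_zero, h4, zero_mul,
    zero_add, add_zero]

lemma mySinIntR (s A B : ℝ) (hs : -1 < s) :
    IntegrableOn (fun u : ℝ => u ^ s * Real.exp (-u) * Real.sin (A + B * u)) (Ioi 0) := by
  have hint : IntegrableOn (fun t : ℝ => Real.exp (-t) * t ^ s) (Ioi 0) := by
    have h := Real.GammaIntegral_convergent (s := s + 1) (by linarith)
    simpa using h
  refine Integrable.mono' hint ?_ ?_
  · refine ContinuousOn.aestronglyMeasurable ?_ measurableSet_Ioi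
    refine ((continuousOn_id.rpow_const fun x hx => Or.inl (ne_of_gt hx)).mul
      ((Real.continuous_exp.comp continuous_neg).continuousOn)).mul
      ((Real.continuous_sin.comp (continuous_const.add
        (continuous_const.mul continuous_id))).continuousOn)
  · filter_upwards [ae_restrict_mem measurableSet_Ioi] with t ht
    rw [Real.norm_eq_abs, abs_mul, abs_mul]
    have h1 : |t ^ s| = t ^ s := abs_of_nonneg (Real.rpow_nonneg (le_of_lt ht) s)
    have h2 : |Real.exp (-t)| = Real.exp (-t) := abs_of_nonneg (Real.exp_nonneg _)
    rw [h1, h2, mul_comm (Real.exp (-t)) (t ^ s)]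
    calc t ^ s * Real.exp (-t) * |Real.sin (A + B * t)| ≤ t ^ s * Real.exp (-t) * 1 := by
          gcongr
          · exact mul_nonneg (Real.rpow_nonneg (le_of_lt ht) s) (Real.exp_nonneg _)
          · exact Real.abs_sin_le_one _
      _ = t ^ s * Real.exp (-t) := mul_one _

lemma myTransferInt (C q s A B : ℝ) (hq : 0 < q) (hs : -1 < s) :
    IntegrableOn (fun x : ℝ =>
      C * x ^ (q - 1 + q * s) * Real.exp (-(x ^ q)) * Real.sin (A + B * x ^ q)) (Ioi 0) := by
  have base := (integrableOn_Ioi_comp_rpow_iff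
      (fun u : ℝ => u ^ s * Real.exp (-u) * Real.sin (A + B * u)) hq.ne').mpr
      (mySinIntR s A B hs)
  have base2 := base.const_mul (C / q)
  refine IntegrableOn.congr_fun base2 (fun x hx => ?_) measurableSet_Ioi
  have hx0 : (0 : ℝ) < x := hx
  have h1 : (x ^ q) ^ s = x ^ (q * s) := (Real.rpow_mul hx0.le q s).symm
  have h2 : x ^ (q - 1) * x ^ (q * s) = x ^ (q - 1 + q * s) :=
    (Real.rpow_add hx0 _ _).symm
  rw [smul_eq_mul, abs_of_pos hq, h1, ← h2]
  field_simp
  try ring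

lemma myTransferVal (C q A B : ℝ) (m : ℕ) (hq : 0 < q) :
    ∫ x : ℝ in Ioi 0,
        C * x ^ (q - 1 + q * (m : ℝ)) * Real.exp (-(x ^ q)) * Real.sin (A + B * x ^ q) =
      C / q * ∫ u : ℝ in Ioi 0, u ^ m * Real.exp (-u) * Real.sin (A + B * u) := by
  have key := integral_comp_rpow_Ioi_of_pos
      (g := fun u : ℝ => C / q * (u ^ m * Real.exp (-u) * Real.sin (A + B * u))) hq
  rw [← MeasureTheory.integral_const_mul (C / q)
    (fun u : ℝ => u ^ m * Real.exp (-u) * Real.sin (A + B * u)), ← key]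
  refine setIntegral_congr_fun measurableSet_Ioi (fun x hx => ?_)
  have hx0 : (0 : ℝ) < x := hx
  have h1 : (x ^ q) ^ m = x ^ (q * (m : ℝ)) := by
    rw [Real.rpow_mul hx0.le, Real.rpow_natCast]
  have h2 : x ^ (q - 1) * x ^ (q * (m : ℝ)) = x ^ (q - 1 + q * (m : ℝ)) :=
    (Real.rpow_add hx0 _ _).symm
  rw [smul_eq_mul, h1, ← h2]
  field_simp
  try ring

set_option maxRecDepth 8000 in
theorem moments_vanish_sin_perturbation_odd_normal_power
    (n : ℕ) (hn : 1 ≤ n) (fn hs : ℝ → ℝ)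
    (hfn : ∀ x : ℝ, x ≠ 0 → fn x =
      (1 / ((2 * (n : ℝ) + 1) * Real.sqrt Real.pi)) *
        |x| ^ (-(2 * (n : ℝ)) / (2 * (n : ℝ) + 1)) *
        Real.exp (-|x| ^ (2 / (2 * (n : ℝ) + 1))))
    (hhs : ∀ t : ℝ, t ≠ 0 → hs t =
      Real.sign t * Real.sin (Real.pi * (n : ℝ) / (2 * (n : ℝ) + 1) +
        Real.tan (Real.pi / (2 * (n : ℝ) + 1)) * |t| ^ (2 / (2 * (n : ℝ) + 1)))) :
    ∀ k : ℕ, Integrable (fun x : ℝ => x ^ k * fn x * hs x) ∧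
      ∫ x : ℝ, x ^ k * fn x * hs x = 0 := by
  intro k
  have hP0 : (0 : ℝ) < 2 * (n : ℝ) + 1 := by positivity
  have hn1 : (1 : ℝ) ≤ (n : ℝ) := by exact_mod_cast hn
  set P : ℝ := 2 * (n : ℝ) + 1 with hP
  set q : ℝ := 2 / P with hqdef
  set A : ℝ := Real.pi * (n : ℝ) / P with hA
  set B : ℝ := Real.tan (Real.pi / P) with hB
  set C : ℝ := 1 / (P * Real.sqrt Real.pi) with hC
  have hq : 0 < q := by positivity
  set G : ℝ → ℝ := fun x => x ^ k *
      (C * |x| ^ (-(2 * (n : ℝ)) / P) * Real.exp (-|x| ^ q)) *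
      (Real.sign x * Real.sin (A + B * |x| ^ q)) with hG
  -- a.e. equality
  have hae : (fun x : ℝ => x ^ k * fn x * hs x) =ᵐ[volume] G := by
    have h0 : ∀ᵐ x : ℝ ∂volume, x ≠ 0 := by
      refine ae_iff.mpr ?_
      have he : {x : ℝ | ¬x ≠ 0} = {0} := by ext x; simp
      rw [he]
      exact measure_singleton 0
    filter_upwards [h0] with x hx
    rw [hfn x hx, hhs x hx]
  -- oddness/evenness
  have hOdd : ∀ x : ℝ, G (-x) = (-1 : ℝ) ^ (k + 1) * G x := by
    intro x
    have h1 : (-x) ^ k = (-1 : ℝ) ^ k * x ^ k := by rw [neg_pow]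
    have h2 : (-1 : ℝ) ^ (k + 1) = (-1) ^ k * (-1) := by rw [pow_succ]
    simp only [hG, abs_neg, Real.sign_neg]
    rw [h1, h2]
    ring
  -- exponent bookkeeping
  set s : ℝ := (P * (k : ℝ) - 1) / 2 with hsdef
  have hs : -1 < s := by
    have h2 : (0 : ℝ) ≤ P * (k : ℝ) := by positivity
    rw [hsdef, lt_div_iff₀ two_pos]
    linarith
  have hexp : q - 1 + q * s = (k : ℝ) + -(2 * (n : ℝ)) / P := by
    rw [hsdef, hqdef, hP]
    field_simp
    ring
  -- integrability on Ioi 0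
  have hmatch : ∀ x : ℝ, x ∈ Ioi (0 : ℝ) →
      C * x ^ (q - 1 + q * s) * Real.exp (-(x ^ q)) * Real.sin (A + B * x ^ q) = G x := by
    intro x hx
    have hx0 : (0 : ℝ) < x := hx
    rw [hG]
    simp only [abs_of_pos hx0, Real.sign_of_pos hx0]
    rw [hexp, Real.rpow_add hx0, Real.rpow_natCast]
    ring
  have hIoi : IntegrableOn G (Ioi 0) := by
    refine (myTransferInt C q s A B hq hs).congr_fun hmatch measurableSet_Ioi
  -- integrability on Iio 0
  have hsq : ((-1 : ℝ) ^ (k + 1)) * ((-1 : ℝ) ^ (k + 1)) = 1 := by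
    rw [← pow_add]
    exact Even.neg_one_pow ⟨k + 1, rfl⟩
  have hT : Integrable ((Ioi (0 : ℝ)).indicator G) :=
    (integrable_indicator_iff measurableSet_Ioi).2 hIoi
  have hT2 : Integrable (fun x : ℝ => (Ioi (0 : ℝ)).indicator G (-1 * x)) :=
    (integrable_comp_mul_left_iff _ (by norm_num : (-1 : ℝ) ≠ 0)).2 hT
  have hT3 : Integrable
      (fun x : ℝ => (-1 : ℝ) ^ (k + 1) * (Ioi (0 : ℝ)).indicator G (-1 * x)) :=
    hT2.const_mul _
  have hIio : IntegrableOn G (Iio 0) := by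
    rw [← integrable_indicator_iff measurableSet_Iio]
    refine hT3.congr (Eventually.of_forall fun x => ?_)
    dsimp only
    by_cases hx : x < 0
    · rw [indicator_of_mem (show x ∈ Iio (0:ℝ) from hx)]
      rw [indicator_of_mem (show (-1 : ℝ) * x ∈ Ioi (0:ℝ) by simpa using hx)]
      have h1 : (-1 : ℝ) * x = -x := by ring
      rw [h1, hOdd x, ← mul_assoc, hsq, one_mul]
    · rw [indicator_of_notMem (show x ∉ Iio (0:ℝ) from hx)]
      rw [indicator_of_notMem (show (-1 : ℝ) * x ∉ Ioi (0:ℝ) by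
        simp only [mem_Ioi, not_lt] at *
        nlinarith), mul_zero]
  have hInt : Integrable G := by
    have h := hIio.union hIoi
    rw [Iio_union_Ioi] at h
    rwa [IntegrableOn, restrict_compl_singleton] at h
  have hIic : IntegrableOn G (Iic 0) := by
    rw [IntegrableOn, ← Measure.restrict_congr_set Iio_ae_eq_Iic]
    exact hIio
  -- negative half integral
  have hneg : ∫ x in Iic (0 : ℝ), G x = (-1 : ℝ) ^ (k + 1) * ∫ x in Ioi (0 : ℝ), G x := by
    have h := integral_comp_neg_Ioi (0 : ℝ) G
    rw [neg_zero] at h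
    rw [← h]
    rw [setIntegral_congr_fun measurableSet_Ioi
      (fun x _ => hOdd x : ∀ x ∈ Ioi (0:ℝ), G (-x) = (-1 : ℝ) ^ (k + 1) * G x)]
    exact integral_const_mul _ _
  -- value on Ioi 0 for odd k
  have hval : Odd k → ∫ x in Ioi (0 : ℝ), G x = 0 := by
    rintro ⟨j, rfl⟩
    set m : ℕ := (2 * n + 1) * j + n with hm
    have hms : s = (m : ℝ) := by
      rw [hsdef, hm, hP]
      push_cast
      field_simp
      ring
    have hval1 : ∫ x in Ioi (0 : ℝ), G x =
        C / q * ∫ u : ℝ in Ioi 0, u ^ m * Real.exp (-u) * Real.sin (A + B * u) := by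
      rw [← myTransferVal C q A B m hq, ← hms]
      exact (setIntegral_congr_fun measurableSet_Ioi hmatch).symm
    rw [hval1, mySinVal m A B]
    have hθpos : 0 < Real.pi / P := by positivity
    have hθlt : Real.pi / P < Real.pi / 2 := by
      apply div_lt_div_of_pos_left Real.pi_pos two_pos
      rw [hP]; linarith
    have hcos : Real.cos (Real.pi / P) ≠ 0 :=
      (Real.cos_pos_of_mem_Ioo ⟨by linarith [Real.pi_pos], hθlt⟩).ne'
    have hsin : Real.sin (A + ((m : ℝ) + 1) * (Real.pi / P)) = 0 := by
      have harg : A + ((m : ℝ) + 1) * (Real.pi / P) = ((j + 1 : ℕ) : ℝ) * Real.pi := by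
        rw [hA, hm, hP]
        push_cast
        field_simp
        ring
      rw [harg]
      exact Real.sin_nat_mul_pi (j + 1)
    rw [hB, myIm (Real.pi / P) A m hcos hsin, mul_zero]
  -- conclusion
  have hGint : ∫ x : ℝ, G x = 0 := by
    rw [← intervalIntegral.integral_Iic_add_Ioi hIic hIoi, hneg]
    rcases Nat.even_or_odd k with he | ho
    · have : (-1 : ℝ) ^ (k + 1) = -1 := Odd.neg_one_pow (Even.add_one he)
      rw [this]
      ring
    · rw [hval ho]
      ring
  constructor
  · exact hInt.congr hae.symm
  · rw [integral_congr_ae hae, hGint]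
end

section
/- Let n ≥ 1 be a natural number and let X be a real-valued random variable with the normal distribution of mean 0 and variance 1/2. Then the random variable X^{2n+1} is absolutely continuous with probability density f_n(x) = (1/((2n+1)·√π))·|x|^{−2n/(2n+1)}·exp(−|x|^{2/(2n+1)}), x ≠ 0; that is, the pushforward of the N(0,1/2) law under x ↦ x^{2n+1} equals the measure with density f_n with respect to Lebesgue measure on ℝ. Moreover f_n has a finite moment sequence: ∫_ℝ |x|^k f_n(x) dx < ∞ for every natural number k. -/
open MeasureTheory Filter Set ProbabilityTheory

private lemma lintegral_image_eq_lintegral_abs_deriv_mul' {s : Set ℝ} {f : ℝ → ℝ} {f' : ℝ → ℝ}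
    (hs : MeasurableSet s) (hf' : ∀ x ∈ s, HasDerivWithinAt f (f' x) s x)
    (hf : Set.InjOn f s) (g : ℝ → ENNReal) :
    ∫⁻ x in f '' s, g x = ∫⁻ x in s, ENNReal.ofReal |f' x| * g (f x) := by
  simpa only [ContinuousLinearMap.det_toSpanSingleton] using
    lintegral_image_eq_lintegral_abs_det_fderiv_mul volume hs
      (fun x hx => (hf' x hx).hasFDerivWithinAt) hf g

private lemma integrable_abs_rpow_mul_exp_neg_sq {s : ℝ} (hs : -1 < s) :
    Integrable (fun x : ℝ => |x| ^ s * Real.exp (-x ^ 2)) := by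
  have h1 : IntegrableOn (fun x : ℝ => |x| ^ s * Real.exp (-x ^ 2)) (Set.Ioi 0) := by
    refine ((integrableOn_rpow_mul_exp_neg_mul_sq one_pos hs).congr_fun
      (fun x hx => ?_) measurableSet_Ioi)
    rw [abs_of_pos hx]; simp only [neg_one_mul]
  rw [← integrableOn_univ, ← Iio_union_Ici (a := (0 : ℝ)), integrableOn_union,
    integrableOn_Ici_iff_integrableOn_Ioi]
  refine ⟨?_, h1⟩
  rw [← (Measure.measurePreserving_neg (volume : Measure ℝ)).integrableOn_comp_preimage
      (Homeomorph.neg ℝ).measurableEmbedding]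
  simp only [Function.comp_def, abs_neg, neg_sq, neg_preimage, neg_Iio, neg_zero]
  exact h1

theorem odd_power_of_normal_has_density
    (n : ℕ) (hn : 1 ≤ n) (fn : ℝ → ℝ)
    (hfn : ∀ x : ℝ, x ≠ 0 → fn x =
      (1 / ((2 * (n : ℝ) + 1) * Real.sqrt Real.pi)) *
        |x| ^ (-(2 * (n : ℝ)) / (2 * (n : ℝ) + 1)) *
        Real.exp (-|x| ^ (2 / (2 * (n : ℝ) + 1)))) :
    (Measure.map (fun x : ℝ => x ^ (2 * n + 1)) (gaussianReal 0 (1 / 2)) =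
      volume.withDensity (fun x : ℝ => ENNReal.ofReal (fn x))) ∧
    ∀ k : ℕ, ∫⁻ x : ℝ, ENNReal.ofReal (|x| ^ k * fn x) < ⊤ := by
  have hπ : 0 < Real.sqrt Real.pi := Real.sqrt_pos.mpr Real.pi_pos
  have hv : (1 / 2 : NNReal) ≠ 0 := by norm_num
  set m : ℕ := 2 * n + 1 with hm
  have hmo : Odd m := ⟨n, by omega⟩
  have hmR : (m : ℝ) = 2 * (n : ℝ) + 1 := by push_cast [hm]; ring
  have hm0 : (0 : ℝ) < (m : ℝ) := by rw [hmR]; positivity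
  set c : ℝ := (m : ℝ)⁻¹ with hc
  have hc0 : 0 < c := by positivity
  set S : ℝ → ℝ := fun y => Real.sign y * |y| ^ c with hS
  -- T ∘ S = id
  have hTS : ∀ y : ℝ, (S y) ^ m = y := by
    intro y
    rcases lt_trichotomy y 0 with hy | hy | hy
    · rw [hS]; simp only
      rw [Real.sign_of_neg hy, abs_of_neg hy, neg_one_mul, hmo.neg_pow,
        ← Real.rpow_natCast ((-y) ^ c) m, ← Real.rpow_mul (by linarith),
        inv_mul_cancel₀ hm0.ne', Real.rpow_one, neg_neg]
    · rw [hS, hy]; simp [Real.sign_zero, Real.zero_rpow hc0.ne',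
        zero_pow (by omega : m ≠ 0)]
    · rw [hS]; simp only
      rw [Real.sign_of_pos hy, abs_of_pos hy, one_mul,
        ← Real.rpow_natCast (y ^ c) m, ← Real.rpow_mul hy.le,
        inv_mul_cancel₀ hm0.ne', Real.rpow_one]
  have hTinj : Function.Injective (fun x : ℝ => x ^ m) := hmo.strictMono_pow.injective
  have hST : ∀ x : ℝ, S (x ^ m) = x := fun x => hTinj (hTS (x ^ m))
  have hSinj : Function.Injective S := by
    intro a b h
    rw [← hTS a, ← hTS b, h]
  have himg : ∀ s : Set ℝ, S '' s = (fun x : ℝ => x ^ m) ⁻¹' s := by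
    intro s; ext x
    constructor
    · rintro ⟨y, hy, rfl⟩
      simpa [Set.mem_preimage, hTS y] using hy
    · intro hx
      exact ⟨x ^ m, hx, hST x⟩
  have hT_meas : Measurable fun x : ℝ => x ^ m := measurable_id.pow_const m
  -- derivative of S
  have hd : ∀ y : ℝ, y ≠ 0 → HasDerivAt S (c * |y| ^ (c - 1)) y := by
    intro y hy
    rcases hy.lt_or_gt with hy | hy
    · have h2 : HasDerivAt (fun z : ℝ => z ^ c) (c * (-y) ^ (c - 1)) (-y) :=
        Real.hasDerivAt_rpow_const (Or.inl (by linarith))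
      have h3 := (h2.comp y (hasDerivAt_neg y)).neg
      have h1 : HasDerivAt (fun z : ℝ => -((-z) ^ c)) (c * (-y) ^ (c - 1)) y := by
        convert h3 using 1
        · rfl
        · rfl
        · rfl
        ring
      have heq : S =ᶠ[nhds y] fun z => -((-z) ^ c) := by
        filter_upwards [Iio_mem_nhds hy] with z hz
        rw [hS]; simp only
        rw [Real.sign_of_neg hz, abs_of_neg hz]; ring
      have h4 := h1.congr_of_eventuallyEq heq
      convert h4 using 2
      · rfl
      · rfl
      rw [abs_of_neg hy]
    · have h2 : HasDerivAt (fun z : ℝ => z ^ c) (c * y ^ (c - 1)) y :=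
        Real.hasDerivAt_rpow_const (Or.inl hy.ne')
      have heq : S =ᶠ[nhds y] fun z => z ^ c := by
        filter_upwards [Ioi_mem_nhds hy] with z hz
        rw [hS]; simp only
        rw [Real.sign_of_pos hz, abs_of_pos hz, one_mul]
      have h4 := h2.congr_of_eventuallyEq heq
      convert h4 using 2
      · rfl
      · rfl
      rw [abs_of_pos hy]
  -- the gaussian pdf
  have hpdf : ∀ x : ℝ, gaussianPDFReal 0 (1 / 2) x
      = (Real.sqrt Real.pi)⁻¹ * Real.exp (-x ^ 2) := by
    intro x
    rw [gaussianPDFReal]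
    norm_num
    field_simp
  -- pointwise density identity
  have hpt : ∀ y : ℝ, y ≠ 0 →
      ENNReal.ofReal |c * |y| ^ (c - 1)| * gaussianPDF 0 (1 / 2) (S y)
        = ENNReal.ofReal (fn y) := by
    intro y hy
    have hsq : (S y) ^ 2 = |y| ^ (2 / (m : ℝ)) := by
      rw [hS]; simp only
      rw [mul_pow, ← Real.rpow_natCast (|y| ^ c) 2, ← Real.rpow_mul (abs_nonneg y)]
      have hsgn : (Real.sign y) ^ 2 = 1 := by
        rcases hy.lt_or_gt with h | h
        · rw [Real.sign_of_neg h]; norm_num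
        · rw [Real.sign_of_pos h]; norm_num
      rw [hsgn, one_mul, hc]
      norm_num
      rw [div_eq_mul_inv, mul_comm]
    rw [gaussianPDF, hpdf, hsq, ← ENNReal.ofReal_mul (abs_nonneg _), hfn y hy]
    congr 1
    rw [abs_of_nonneg (by positivity)]
    have he1 : c - 1 = -(2 * (n : ℝ)) / (2 * (n : ℝ) + 1) := by
      rw [hc, hmR]
      field_simp
      ring
    have he2 : 2 / (m : ℝ) = 2 / (2 * (n : ℝ) + 1) := by rw [hmR]
    rw [he1, he2, hc, hmR]
    have h2n : (2 * (n : ℝ) + 1) ≠ 0 := by positivity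
    field_simp
  -- main measure identity
  have hmap : Measure.map (fun x : ℝ => x ^ m) (gaussianReal 0 (1 / 2)) =
      volume.withDensity (fun x : ℝ => ENNReal.ofReal (fn x)) := by
    ext s hs
    rw [Measure.map_apply hT_meas hs, withDensity_apply _ hs]
    have h0 : (volume : Measure ℝ) {0} = 0 := measure_singleton 0
    have hs' : MeasurableSet (s \ {0}) := hs.diff (measurableSet_singleton 0)
    have hg0 : gaussianReal 0 (1 / 2) {(0 : ℝ)} = 0 := by
      rw [gaussianReal_apply 0 hv {0}]
      rw [Measure.restrict_singleton]
      simp [h0]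
    have hgs : gaussianReal 0 (1 / 2) ((fun x : ℝ => x ^ m) ⁻¹' s)
        = gaussianReal 0 (1 / 2) ((fun x : ℝ => x ^ m) ⁻¹' (s \ {0})) := by
      have hsub : (fun x : ℝ => x ^ m) ⁻¹' s
          ⊆ ((fun x : ℝ => x ^ m) ⁻¹' (s \ {0})) ∪ {0} := by
        intro x hx
        by_cases hx0 : x = 0
        · exact Or.inr (by simp [hx0])
        · refine Or.inl ⟨hx, ?_⟩
          simp only [Set.mem_singleton_iff]
          exact pow_ne_zero m hx0
      refine le_antisymm ?_ (measure_mono (Set.preimage_mono Set.diff_subset))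
      calc gaussianReal 0 (1 / 2) ((fun x : ℝ => x ^ m) ⁻¹' s)
          ≤ gaussianReal 0 (1 / 2) (((fun x : ℝ => x ^ m) ⁻¹' (s \ {0})) ∪ {0}) :=
            measure_mono hsub
        _ ≤ gaussianReal 0 (1 / 2) ((fun x : ℝ => x ^ m) ⁻¹' (s \ {0}))
            + gaussianReal 0 (1 / 2) {0} := measure_union_le _ _
        _ = _ := by rw [hg0, add_zero]
    have hvs : ∫⁻ x in s, ENNReal.ofReal (fn x)
        = ∫⁻ x in s \ {0}, ENNReal.ofReal (fn x) := by
      refine (setLIntegral_congr ?_).symm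
      exact diff_ae_eq_self.mpr (measure_mono_null Set.inter_subset_right h0)
    rw [hgs, hvs, ← himg (s \ {0}), gaussianReal_apply 0 hv _,
      lintegral_image_eq_lintegral_abs_deriv_mul' hs'
        (fun y hy => (hd y hy.2).hasDerivWithinAt) hSinj.injOn _]
    refine setLIntegral_congr_fun hs' (fun y hy => ?_)
    exact hpt y hy.2
  refine ⟨hmap, ?_⟩
  -- moments
  have h0ae : ∀ᵐ x : ℝ ∂volume, x ≠ 0 := by
    filter_upwards [compl_mem_ae_iff.mpr
      (measure_singleton (0 : ℝ) : (volume : Measure ℝ) {0} = 0)] with x hx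
    simpa using hx
  set F : ℝ → ℝ := fun x =>
    (1 / ((2 * (n : ℝ) + 1) * Real.sqrt Real.pi)) *
      |x| ^ (-(2 * (n : ℝ)) / (2 * (n : ℝ) + 1)) *
      Real.exp (-|x| ^ (2 / (2 * (n : ℝ) + 1))) with hF
  have habs_meas : ∀ a : ℝ, Measurable fun x : ℝ => |x| ^ a := by
    intro a
    have heq : (fun x : ℝ => |x| ^ a) = Set.piecewise {0} (fun _ => |(0 : ℝ)| ^ a)
        (fun x => Real.exp (Real.log |x| * a)) := by
      funext x
      by_cases hx : x = 0
      · simp [hx]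
      · rw [Set.piecewise_eq_of_notMem _ _ _ (by simpa using hx),
          Real.rpow_def_of_pos (abs_pos.mpr hx)]
    rw [heq]
    exact Measurable.piecewise (measurableSet_singleton 0) measurable_const
      (Real.measurable_exp.comp ((Real.measurable_log.comp measurable_abs).mul_const a))
  have hFmeas : Measurable F := by
    apply Measurable.mul
    · exact measurable_const.mul (habs_meas _)
    · exact Real.measurable_exp.comp (habs_meas _).neg
  have hae : (fun x : ℝ => ENNReal.ofReal (fn x)) =ᵐ[volume]
      fun x : ℝ => ENNReal.ofReal (F x) := by
    filter_upwards [h0ae] with x hx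
    rw [hfn x hx]
  intro k
  have hgk : Measurable fun x : ℝ => ENNReal.ofReal (|x| ^ k) :=
    ((measurable_abs.pow_const k)).ennreal_ofReal
  have h1 : ∫⁻ x : ℝ, ENNReal.ofReal (|x| ^ k * fn x)
      = ∫⁻ x : ℝ, ENNReal.ofReal (F x) * ENNReal.ofReal (|x| ^ k) := by
    refine lintegral_congr_ae ?_
    filter_upwards [h0ae] with x hx
    rw [hfn x hx, ENNReal.ofReal_mul (by positivity : (0:ℝ) ≤ |x| ^ k), mul_comm]
  have h5 := lintegral_withDensity_eq_lintegral_mul volume hFmeas.ennreal_ofReal hgk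
  simp only [Pi.mul_apply] at h5
  rw [h1, ← h5, ← withDensity_congr_ae hae, ← hmap, lintegral_map hgk hT_meas]
  rw [gaussianReal_of_var_ne_zero 0 hv,
    lintegral_withDensity_eq_lintegral_mul volume (measurable_gaussianPDF 0 (1/2))
      ((hT_meas.abs.pow_const k).ennreal_ofReal)]
  have h2 : ∀ x : ℝ, (gaussianPDF 0 (1/2) * fun x : ℝ => ENNReal.ofReal (|x ^ m| ^ k)) x
      = ENNReal.ofReal (gaussianPDFReal 0 (1/2) x * |x ^ m| ^ k) := by
    intro x
    simp only [Pi.mul_apply, gaussianPDF]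
    rw [← ENNReal.ofReal_mul (gaussianPDFReal_nonneg _ _ _)]
  simp only [h2]
  have h3 : (fun x : ℝ => gaussianPDFReal 0 (1/2) x * |x ^ m| ^ k)
      = fun x : ℝ => (Real.sqrt Real.pi)⁻¹ *
        (|x| ^ ((m * k : ℕ) : ℝ) * Real.exp (-x ^ 2)) := by
    funext x
    rw [hpdf x, abs_pow, ← pow_mul, Real.rpow_natCast]
    ring
  have h4 : Integrable (fun x : ℝ => gaussianPDFReal 0 (1/2) x * |x ^ m| ^ k) := by
    rw [h3]
    exact (integrable_abs_rpow_mul_exp_neg_sq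
      (lt_of_lt_of_le (by norm_num) (Nat.cast_nonneg _))).const_mul _
  exact h4.lintegral_lt_top
end
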